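/- For all ψ, φ ∈ [0, π/2], arccos(cos ψ · cos φ) ≤ sqrt(ψ² + φ²). -/

import Mathlib

open Real Set

-- `tan x / x` is monotone on `(0, π/2)`.
lemma tan_div_mono {a b : ℝ} (ha : 0 < a) (hab : a ≤ b) (hb : b < Real.pi / 2) :
    Real.tan a / a ≤ Real.tan b / b := by
  have key : ∀ x ∈ Icc a b, HasDerivAt (fun x => Real.tan x / x)
      ((1 / Real.cos x ^ 2 * x - Real.tan x * 1) / x ^ 2) x := by
    intro x hx
    have hx0 : 0 < x := lt_of_lt_of_le ha hx.1
    have hx2 : x < Real.pi / 2 := lt_of_le_of_lt hx.2 hb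
    have hc : Real.cos x ≠ 0 := by
      have := Real.cos_pos_of_mem_Ioo (show x ∈ Ioo (-(Real.pi/2)) (Real.pi/2) from
        ⟨by linarith [Real.pi_pos], hx2⟩)
      exact ne_of_gt this
    exact (Real.hasDerivAt_tan hc).div (hasDerivAt_id x) (ne_of_gt hx0)
  have hmono : MonotoneOn (fun x => Real.tan x / x) (Icc a b) := by
    apply monotoneOn_of_deriv_nonneg (convex_Icc a b)
    · exact fun x hx => ((key x hx).continuousAt).continuousWithinAt
    · intro x hx
      rw [interior_Icc] at hx
      exact ((key x (Ioo_subset_Icc_self hx)).differentiableAt).differentiableWithinAt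
    · intro x hx
      rw [interior_Icc] at hx
      rw [((key x (Ioo_subset_Icc_self hx))).deriv]
      have hx0 : 0 < x := lt_trans ha hx.1
      have hx2 : x < Real.pi / 2 := lt_trans hx.2 hb
      have hcpos : 0 < Real.cos x := Real.cos_pos_of_mem_Ioo
        ⟨by linarith [Real.pi_pos], hx2⟩
      have hs : Real.sin x * Real.cos x ≤ x := by
        calc Real.sin x * Real.cos x ≤ Real.sin x * 1 := by
              apply mul_le_mul_of_nonneg_left (Real.cos_le_one x)
              exact Real.sin_nonneg_of_nonneg_of_le_pi hx0.le (by linarith [Real.pi_pos])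
          _ = Real.sin x := mul_one _
          _ ≤ x := Real.sin_le hx0.le
      have hnum : 1 / Real.cos x ^ 2 * x - Real.tan x * 1
          = (x - Real.sin x * Real.cos x) / Real.cos x ^ 2 := by
        rw [Real.tan_eq_sin_div_cos]
        field_simp
      rw [hnum]
      have h0 : (0:ℝ) ≤ x - Real.sin x * Real.cos x := by linarith
      exact div_nonneg (div_nonneg h0 (sq_nonneg _)) (sq_nonneg _)
  exact hmono (left_mem_Icc.mpr hab) (right_mem_Icc.mpr hab) hab


-- key lemma: cos √(s+t) ≤ cos √s * cos √t
lemma cos_sqrt_superadd {s t : ℝ} (hs : 0 ≤ s) (ht : 0 ≤ t)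
    (hu : Real.sqrt (s + t) < Real.pi / 2) :
    Real.cos (Real.sqrt (s + t)) ≤ Real.cos (Real.sqrt s) * Real.cos (Real.sqrt t) := by
  set u := s + t with hudef
  have hu0 : 0 ≤ u := by positivity
  rcases eq_or_lt_of_le hu0 with h0 | hupos
  · have hs0 : s = 0 := by linarith [ht]
    have ht0 : t = 0 := by linarith [hs]
    simp [hs0, ht0, ← hudef, ← h0]
  -- cos (√x) > 0 for x ∈ [0, u]
  have hcpos : ∀ x ∈ Icc (0:ℝ) u, 0 < Real.cos (Real.sqrt x) := by
    intro x hx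
    apply Real.cos_pos_of_mem_Ioo
    constructor
    · have := Real.sqrt_nonneg x; linarith [Real.pi_pos]
    · exact lt_of_le_of_lt (Real.sqrt_le_sqrt hx.2) hu
  set h : ℝ → ℝ := fun x => Real.log (Real.cos (Real.sqrt x)) with hdef
  have hderiv : ∀ x ∈ Ioo (0:ℝ) u, HasDerivAt h
      ((Real.cos (Real.sqrt x))⁻¹ * (-Real.sin (Real.sqrt x) * (1 / (2 * Real.sqrt x)))) x := by
    intro x hx
    have h1 : HasDerivAt Real.sqrt (1 / (2 * Real.sqrt x)) x := Real.hasDerivAt_sqrt (ne_of_gt hx.1)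
    have h2 : HasDerivAt Real.cos (-Real.sin (Real.sqrt x)) (Real.sqrt x) := Real.hasDerivAt_cos _
    have hcx : Real.cos (Real.sqrt x) ≠ 0 :=
      ne_of_gt (hcpos x ⟨hx.1.le, hx.2.le⟩)
    have h3 : HasDerivAt Real.log (Real.cos (Real.sqrt x))⁻¹ (Real.cos (Real.sqrt x)) :=
      Real.hasDerivAt_log hcx
    exact h3.comp x (h2.comp x h1)
  have hconc : ConcaveOn ℝ (Icc (0:ℝ) u) h := by
    apply AntitoneOn.concaveOn_of_deriv (convex_Icc 0 u)
    · -- continuity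
      apply ContinuousOn.log
      · exact (Real.continuous_cos.comp Real.continuous_sqrt).continuousOn
      · exact fun x hx => ne_of_gt (hcpos x hx)
    · rw [interior_Icc]
      exact fun x hx => ((hderiv x hx).differentiableAt).differentiableWithinAt
    · rw [interior_Icc]
      intro x hx y hy hxy
      rw [(hderiv x hx).deriv, (hderiv y hy).deriv]
      -- reduce to tan_div_mono
      set a := Real.sqrt x with hadef
      set b := Real.sqrt y with hbdef
      have ha0 : 0 < a := Real.sqrt_pos.mpr hx.1
      have hb0 : 0 < b := Real.sqrt_pos.mpr hy.1
      have hab : a ≤ b := Real.sqrt_le_sqrt hxy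
      have hb2 : b < Real.pi / 2 := lt_of_le_of_lt (Real.sqrt_le_sqrt hy.2.le) hu
      have hca : 0 < Real.cos a := hcpos x ⟨hx.1.le, hx.2.le⟩
      have hcb : 0 < Real.cos b := hcpos y ⟨hy.1.le, hy.2.le⟩
      have h1 : Real.tan a / a ≤ Real.tan b / b := tan_div_mono ha0 hab hb2
      rw [Real.tan_eq_sin_div_cos, Real.tan_eq_sin_div_cos] at h1
      have ea : (Real.cos a)⁻¹ * (-Real.sin a * (1 / (2 * a))) = -(Real.sin a / Real.cos a / a) / 2 := by
        field_simp
      have eb : (Real.cos b)⁻¹ * (-Real.sin b * (1 / (2 * b))) = -(Real.sin b / Real.cos b / b) / 2 := by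
        field_simp
      rw [ea, eb]
      linarith
  -- superadditivity
  have h00 : h 0 = 0 := by simp [hdef]
  have hmemu : u ∈ Icc (0:ℝ) u := ⟨hu0, le_refl u⟩
  have hmem0 : (0:ℝ) ∈ Icc (0:ℝ) u := ⟨le_refl 0, hu0⟩
  have has : (s/u) + (t/u) = 1 := by field_simp [hudef]; linarith
  have hs1 : (s/u) * h u + (t/u) * h 0 ≤ h s := by
    have := hconc.2 hmemu hmem0 (div_nonneg hs hu0) (div_nonneg ht hu0) has
    simpa [smul_eq_mul, div_mul_cancel₀, ne_of_gt hupos] using this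
  have hbs : (t/u) + (s/u) = 1 := by linarith
  have ht1 : (t/u) * h u + (s/u) * h 0 ≤ h t := by
    have := hconc.2 hmemu hmem0 (div_nonneg ht hu0) (div_nonneg hs hu0) hbs
    simpa [smul_eq_mul, div_mul_cancel₀, ne_of_gt hupos] using this
  have hsum : h u ≤ h s + h t := by
    rw [h00] at hs1 ht1
    have : (s/u) * h u + (t/u) * h u ≤ h s + h t := by linarith
    calc h u = ((s/u) + (t/u)) * h u := by rw [has]; ring
      _ = (s/u) * h u + (t/u) * h u := by ring
      _ ≤ h s + h t := this
  -- exponentiate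
  have hcs : 0 < Real.cos (Real.sqrt s) := hcpos s ⟨hs, by linarith⟩
  have hct : 0 < Real.cos (Real.sqrt t) := hcpos t ⟨ht, by linarith⟩
  have hcu : 0 < Real.cos (Real.sqrt u) := hcpos u hmemu
  have : Real.log (Real.cos (Real.sqrt u)) ≤ Real.log (Real.cos (Real.sqrt s) * Real.cos (Real.sqrt t)) := by
    rw [Real.log_mul (ne_of_gt hcs) (ne_of_gt hct)]
    exact hsum
  exact (Real.log_le_log_iff hcu (by positivity)).mp this

theorem arccos_cos_mul_cos_le (ψ φ : ℝ)
    (hψ : ψ ∈ Set.Icc (0:ℝ) (Real.pi / 2)) (hφ : φ ∈ Set.Icc (0:ℝ) (Real.pi / 2)) :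
    Real.arccos (Real.cos ψ * Real.cos φ) ≤ Real.sqrt (ψ ^ 2 + φ ^ 2) := by
  obtain ⟨hψ0, hψ2⟩ := hψ
  obtain ⟨hφ0, hφ2⟩ := hφ
  have hcψ : 0 ≤ Real.cos ψ := Real.cos_nonneg_of_mem_Icc ⟨by linarith [Real.pi_pos], hψ2⟩
  have hcφ : 0 ≤ Real.cos φ := Real.cos_nonneg_of_mem_Icc ⟨by linarith [Real.pi_pos], hφ2⟩
  set r := Real.sqrt (ψ ^ 2 + φ ^ 2) with hrdef
  rcases le_or_gt (Real.pi / 2) r with hcase | hcase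
  · calc Real.arccos (Real.cos ψ * Real.cos φ) ≤ Real.pi / 2 :=
        Real.arccos_le_pi_div_two.mpr (mul_nonneg hcψ hcφ)
      _ ≤ r := hcase
  · have key : Real.cos r ≤ Real.cos ψ * Real.cos φ := by
      have := cos_sqrt_superadd (s := ψ ^ 2) (t := φ ^ 2) (by positivity) (by positivity)
        (by rw [← hrdef]; exact hcase)
      rwa [Real.sqrt_sq hψ0, Real.sqrt_sq hφ0, ← hrdef] at this
    have hy1 : Real.cos ψ * Real.cos φ ≤ 1 :=
      mul_le_one₀ (Real.cos_le_one ψ) hcφ (Real.cos_le_one φ)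
    have hy0 : -1 ≤ Real.cos ψ * Real.cos φ := by nlinarith
    by_contra hlt
    push_neg at hlt
    have hr0 : 0 ≤ r := Real.sqrt_nonneg _
    have hmem1 : r ∈ Set.Icc 0 Real.pi := ⟨hr0, by linarith [Real.pi_pos]⟩
    have hmem2 : Real.arccos (Real.cos ψ * Real.cos φ) ∈ Set.Icc 0 Real.pi :=
      ⟨Real.arccos_nonneg _, Real.arccos_le_pi _⟩
    have := Real.strictAntiOn_cos hmem1 hmem2 hlt
    rw [Real.cos_arccos hy0 hy1] at this
    linarith
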